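/- Fix q > 1. With g_n and ĝ_n the Fourier cosine coefficients of g(ψ) = (1 − cos²ψ/q)^{-1/2} and of its reciprocal ĝ, one has 8 m q ĝ_m = g_{m+1} − g_{m−1} for every integer m ≥ 1. -/

import Mathlib

open Real MeasureTheory

/-- For `q > 1`, with `g_n` and `ghat_n` the Fourier cosine coefficients of
`g(ψ) = (1 − cos²ψ/q)^{-1/2}` and of `ghat = 1/g`, one has
`8 m q ghat_m = g_{m+1} − g_{m−1}` for every `m ≥ 1`. -/
theorem stmt9 (q : ℝ) (hq : 1 < q) (g ghat : ℕ → ℝ)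
    (hg : ∀ n : ℕ, g n
      = (2/π) * ∫ ψ in (0:ℝ)..π, (1/Real.sqrt (1 - Real.cos ψ^2/q)) * Real.cos (2*n*ψ))
    (hghat : ∀ n : ℕ, ghat n
      = (2/π) * ∫ ψ in (0:ℝ)..π, Real.sqrt (1 - Real.cos ψ^2/q) * Real.cos (2*n*ψ)) :
    ∀ m : ℕ, 1 ≤ m → 8*(m:ℝ)*q*ghat m = g (m+1) - g (m-1) := by
  intro m hm
  have hq0 : (0:ℝ) < q := by linarith
  have hm0 : (1:ℝ) ≤ (m:ℝ) := by exact_mod_cast hm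
  have hmne : (m:ℝ) ≠ 0 := by linarith
  have hu : ∀ ψ : ℝ, 0 < 1 - Real.cos ψ ^ 2 / q := by
    intro ψ
    have h1 : Real.cos ψ ^ 2 ≤ 1 := Real.cos_sq_le_one ψ
    have : Real.cos ψ ^ 2 / q < 1 := by
      rw [div_lt_one hq0]; linarith
    linarith
  have hsne : ∀ ψ : ℝ, Real.sqrt (1 - Real.cos ψ ^ 2 / q) ≠ 0 :=
    fun ψ => ne_of_gt (Real.sqrt_pos.mpr (hu ψ))
  -- derivative of sqrt(1 - cos² ψ / q)
  have hF : ∀ ψ : ℝ, HasDerivAt (fun ψ => Real.sqrt (1 - Real.cos ψ^2/q))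
      (Real.sin (2*ψ) / (2*q) * (1/Real.sqrt (1 - Real.cos ψ^2/q))) ψ := by
    intro ψ
    have hc : HasDerivAt Real.cos (-Real.sin ψ) ψ := Real.hasDerivAt_cos ψ
    have h1 : HasDerivAt (fun ψ => 1 - Real.cos ψ^2/q) (Real.sin (2*ψ)/q) ψ := by
      have := ((hc.pow 2).div_const q).const_sub 1
      refine this.congr_deriv ?_
      rw [Real.sin_two_mul]; norm_num; ring
    have h2 : HasDerivAt Real.sqrt (1 / (2 * Real.sqrt (1 - Real.cos ψ^2/q)))
        (1 - Real.cos ψ^2/q) := Real.hasDerivAt_sqrt (ne_of_gt (hu ψ))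
    have := h2.comp ψ h1
    refine this.congr_deriv ?_
    field_simp
  -- derivative of sin(2mψ)/(2m)
  have hS : ∀ ψ : ℝ, HasDerivAt (fun ψ => Real.sin (2*m*ψ) / (2*m))
      (Real.cos (2*m*ψ)) ψ := by
    intro ψ
    have h1 : HasDerivAt (fun ψ : ℝ => 2*(m:ℝ)*ψ) (2*m) ψ := by
      simpa using (hasDerivAt_id ψ).const_mul (2*(m:ℝ))
    have := ((Real.hasDerivAt_sin (2*m*ψ)).comp ψ h1).div_const (2*m)
    refine this.congr_deriv ?_
    field_simp
  -- derivative of the product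
  have hG : ∀ ψ : ℝ, HasDerivAt
      (fun ψ => Real.sqrt (1 - Real.cos ψ^2/q) * (Real.sin (2*m*ψ) / (2*m)))
      (Real.sin (2*ψ) / (2*q) * (1/Real.sqrt (1 - Real.cos ψ^2/q)) * (Real.sin (2*m*ψ) / (2*m))
        + Real.sqrt (1 - Real.cos ψ^2/q) * Real.cos (2*m*ψ)) ψ :=
    fun ψ => (hF ψ).mul (hS ψ)
  -- continuity facts
  have hcu : Continuous fun ψ : ℝ => 1 - Real.cos ψ^2/q := by continuity
  have hcs : Continuous fun ψ : ℝ => Real.sqrt (1 - Real.cos ψ^2/q) := hcu.sqrt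
  have hcinv : Continuous fun ψ : ℝ => 1/Real.sqrt (1 - Real.cos ψ^2/q) :=
    continuous_const.div hcs hsne
  have hcA : Continuous fun ψ : ℝ =>
      Real.sin (2*ψ) / (2*q) * (1/Real.sqrt (1 - Real.cos ψ^2/q)) * (Real.sin (2*m*ψ) / (2*m)) := by
    fun_prop
  have hcB : Continuous fun ψ : ℝ =>
      Real.sqrt (1 - Real.cos ψ^2/q) * Real.cos (2*m*ψ) := by fun_prop
  have hcI : ∀ c : ℝ, Continuous fun ψ : ℝ =>
      (1/Real.sqrt (1 - Real.cos ψ^2/q)) * Real.cos (c*ψ) := by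
    intro c; fun_prop
  -- FTC
  have hFTC : (∫ ψ in (0:ℝ)..π,
      (Real.sin (2*ψ) / (2*q) * (1/Real.sqrt (1 - Real.cos ψ^2/q)) * (Real.sin (2*m*ψ) / (2*m))
        + Real.sqrt (1 - Real.cos ψ^2/q) * Real.cos (2*m*ψ))) = 0 := by
    rw [intervalIntegral.integral_eq_sub_of_hasDerivAt (fun ψ _ => hG ψ)
      ((hcA.add hcB).intervalIntegrable (μ := MeasureTheory.volume) 0 π)]
    have h1 : Real.sin (2*(m:ℝ)*π) = 0 := by
      have : (2*(m:ℝ)) * π = ((2*m : ℕ) : ℝ) * π := by push_cast; ring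
      rw [this, Real.sin_nat_mul_pi]
    simp [h1]
  have hsplit : (∫ ψ in (0:ℝ)..π, Real.sqrt (1 - Real.cos ψ^2/q) * Real.cos (2*m*ψ))
      = - ∫ ψ in (0:ℝ)..π,
        Real.sin (2*ψ) / (2*q) * (1/Real.sqrt (1 - Real.cos ψ^2/q)) * (Real.sin (2*m*ψ) / (2*m)) := by
    have := intervalIntegral.integral_add (hcA.intervalIntegrable (μ := MeasureTheory.volume) 0 π) (hcB.intervalIntegrable (μ := MeasureTheory.volume) 0 π)
    rw [hFTC] at this
    linarith [this]
  -- pointwise product-to-sum identity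
  have hpt : ∀ ψ : ℝ,
      Real.sin (2*ψ) / (2*q) * (1/Real.sqrt (1 - Real.cos ψ^2/q)) * (Real.sin (2*m*ψ) / (2*m))
      = (1/(8*(m:ℝ)*q)) * ((1/Real.sqrt (1 - Real.cos ψ^2/q)) * Real.cos (2*((m:ℝ)-1)*ψ)
          - (1/Real.sqrt (1 - Real.cos ψ^2/q)) * Real.cos (2*((m:ℝ)+1)*ψ)) := by
    intro ψ
    have hcc : Real.cos (2*((m:ℝ)-1)*ψ) - Real.cos (2*((m:ℝ)+1)*ψ)
        = 2 * Real.sin (2*m*ψ) * Real.sin (2*ψ) := by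
      rw [Real.cos_sub_cos]
      have e1 : (2*((m:ℝ)-1)*ψ + 2*((m:ℝ)+1)*ψ) / 2 = 2*m*ψ := by ring
      have e2 : (2*((m:ℝ)-1)*ψ - 2*((m:ℝ)+1)*ψ) / 2 = -(2*ψ) := by ring
      rw [e1, e2, Real.sin_neg]
      ring
    have heq : Real.cos (2*((m:ℝ)-1)*ψ) = Real.cos (2*((m:ℝ)+1)*ψ)
        + 2 * Real.sin (2*m*ψ) * Real.sin (2*ψ) := by linarith
    rw [heq]
    have hsne' := hsne ψ
    set s := Real.sqrt (1 - Real.cos ψ^2/q) with hs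
    field_simp
    ring
  -- rewrite the integral
  have hInt : (∫ ψ in (0:ℝ)..π,
      Real.sin (2*ψ) / (2*q) * (1/Real.sqrt (1 - Real.cos ψ^2/q)) * (Real.sin (2*m*ψ) / (2*m)))
      = (1/(8*(m:ℝ)*q)) *
        ((∫ ψ in (0:ℝ)..π, (1/Real.sqrt (1 - Real.cos ψ^2/q)) * Real.cos (2*((m:ℝ)-1)*ψ))
        - ∫ ψ in (0:ℝ)..π, (1/Real.sqrt (1 - Real.cos ψ^2/q)) * Real.cos (2*((m:ℝ)+1)*ψ)) := by
    rw [intervalIntegral.integral_congr (g := fun ψ =>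
      (1/(8*(m:ℝ)*q)) * ((1/Real.sqrt (1 - Real.cos ψ^2/q)) * Real.cos (2*((m:ℝ)-1)*ψ)
          - (1/Real.sqrt (1 - Real.cos ψ^2/q)) * Real.cos (2*((m:ℝ)+1)*ψ)))
      (fun ψ _ => hpt ψ)]
    rw [intervalIntegral.integral_const_mul,
      intervalIntegral.integral_sub ((hcI _).intervalIntegrable (μ := MeasureTheory.volume) 0 π)
        ((hcI _).intervalIntegrable (μ := MeasureTheory.volume) 0 π)]
  -- assemble
  have hcast1 : ((m+1 : ℕ) : ℝ) = (m:ℝ) + 1 := by push_cast; ring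
  have hcast2 : ((m-1 : ℕ) : ℝ) = (m:ℝ) - 1 := by
    have : ((m-1:ℕ):ℝ) = (m:ℝ) - ((1:ℕ):ℝ) := Nat.cast_sub hm
    simpa using this
  rw [hghat m, hg (m+1), hg (m-1), hsplit, hInt, hcast1, hcast2]
  have hπ : (π:ℝ) ≠ 0 := Real.pi_ne_zero
  set I1 : ℝ := ∫ ψ in (0:ℝ)..π, (1/Real.sqrt (1 - Real.cos ψ^2/q)) * Real.cos (2*((m:ℝ)-1)*ψ)
  set I2 : ℝ := ∫ ψ in (0:ℝ)..π, (1/Real.sqrt (1 - Real.cos ψ^2/q)) * Real.cos (2*((m:ℝ)+1)*ψ)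
  field_simp
  ring
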